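/- Let θ: lie_2 → lie_3 be the Lie algebra homomorphism sending x ↦ x + y and y ↦ z. Let u, v be tangential derivations of lie_2 with u(x) = ⁅x, a_1⁆, u(y) = ⁅y, b_1⁆, v(x) = ⁅x, a_2⁆, v(y) = ⁅y, b_2⁆ for elements a_1, b_1, a_2, b_2 ∈ lie_2, and let U, V be the derivations of lie_3 (the coproduct images u^{12,3}, v^{12,3}) determined by U(x) = ⁅x, θ(a_1)⁆, U(y) = ⁅y, θ(a_1)⁆, U(z) = ⁅z, θ(b_1)⁆ and V(x) = ⁅x, θ(a_2)⁆, V(y) = ⁅y, θ(a_2)⁆, V(z) = ⁅z, θ(b_2)⁆. Then ⁅U, V⁆(x) = ⁅x, θ(u(a_2) − v(a_1) + ⁅a_1, a_2⁆)⁆, ⁅U, V⁆(y) = ⁅y, θ(u(a_2) − v(a_1) + ⁅a_1, a_2⁆)⁆, and ⁅U, V⁆(z) = ⁅z, θ(u(b_2) − v(b_1) + ⁅b_1, b_2⁆)⁆; that is, the coproduct map is a Lie algebra homomorphism: [u^{12,3}, v^{12,3}] = [u,v]^{12,3}. -/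

import Mathlib

open FreeLieAlgebra

noncomputable section

/-- The coproduct homomorphism `θ : lie_2 → lie_3`, `x ↦ x + y`, `y ↦ z`. -/
def theta (k : Type) [Field k] :
    FreeLieAlgebra k (Fin 2) →ₗ⁅k⁆ FreeLieAlgebra k (Fin 3) :=
  FreeLieAlgebra.lift k ![of k (0 : Fin 3) + of k (1 : Fin 3), of k (2 : Fin 3)]

section Dbl

variable (k : Type) [Field k] (L : Type) [LieRing L] [LieAlgebra k L]

/-- Auxiliary: `L ⋉ L` with bracket `⁅(a,m),(b,n)⁆ = (⁅a,b⁆, ⁅a,n⁆ + ⁅m,b⁆)`. -/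
def Dbl : Type := L × L

instance : AddCommGroup (Dbl L) := inferInstanceAs (AddCommGroup (L × L))
instance : Module k (Dbl L) := inferInstanceAs (Module k (L × L))

variable {L} in
lemma Dbl.add_fst (p q : Dbl L) : (p + q).1 = p.1 + q.1 := rfl
variable {L} in
lemma Dbl.add_snd (p q : Dbl L) : (p + q).2 = p.2 + q.2 := rfl
variable {L} in
lemma Dbl.zero_fst : (0 : Dbl L).1 = 0 := rfl
variable {L} in
lemma Dbl.zero_snd : (0 : Dbl L).2 = 0 := rfl
variable {k L} in
lemma Dbl.smul_fst (t : k) (p : Dbl L) : (t • p).1 = t • p.1 := rfl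
variable {k L} in
lemma Dbl.smul_snd (t : k) (p : Dbl L) : (t • p).2 = t • p.2 := rfl

instance : LieRing (Dbl L) :=
  { (inferInstanceAs (AddCommGroup (L × L)) : AddCommGroup (L × L)) with
    bracket := fun p q => (⁅p.1, q.1⁆, ⁅p.1, q.2⁆ + ⁅p.2, q.1⁆)
    add_lie := by
      intro x y z
      show ((⁅x.1 + y.1, z.1⁆ : L), (⁅x.1 + y.1, z.2⁆ + ⁅x.2 + y.2, z.1⁆ : L)) =
        ((⁅x.1, z.1⁆ + ⁅y.1, z.1⁆ : L), ((⁅x.1, z.2⁆ + ⁅x.2, z.1⁆) + (⁅y.1, z.2⁆ + ⁅y.2, z.1⁆) : L))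
      refine congrArg₂ Prod.mk (add_lie _ _ _) ?_
      rw [add_lie, add_lie]; abel
    lie_add := by
      intro x y z
      show ((⁅x.1, y.1 + z.1⁆ : L), (⁅x.1, y.2 + z.2⁆ + ⁅x.2, y.1 + z.1⁆ : L)) =
        ((⁅x.1, y.1⁆ + ⁅x.1, z.1⁆ : L), ((⁅x.1, y.2⁆ + ⁅x.2, y.1⁆) + (⁅x.1, z.2⁆ + ⁅x.2, z.1⁆) : L))
      refine congrArg₂ Prod.mk (lie_add _ _ _) ?_
      rw [lie_add, lie_add]; abel
    lie_self := by
      intro x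
      show ((⁅x.1, x.1⁆ : L), (⁅x.1, x.2⁆ + ⁅x.2, x.1⁆ : L)) = ((0 : L), (0 : L))
      refine congrArg₂ Prod.mk (lie_self _) ?_
      rw [← lie_skew x.1 x.2]; abel
    leibniz_lie := by
      intro x y z
      show ((⁅x.1, ⁅y.1, z.1⁆⁆ : L), (⁅x.1, ⁅y.1, z.2⁆ + ⁅y.2, z.1⁆⁆ + ⁅x.2, ⁅y.1, z.1⁆⁆ : L)) =
        ((⁅⁅x.1, y.1⁆, z.1⁆ : L), (⁅⁅x.1, y.1⁆, z.2⁆ + ⁅⁅x.1, y.2⁆ + ⁅x.2, y.1⁆, z.1⁆ : L)) +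
        ((⁅y.1, ⁅x.1, z.1⁆⁆ : L), (⁅y.1, ⁅x.1, z.2⁆ + ⁅x.2, z.1⁆⁆ + ⁅y.2, ⁅x.1, z.1⁆⁆ : L))
      refine congrArg₂ Prod.mk (leibniz_lie _ _ _) ?_
      show _ = (⁅⁅x.1, y.1⁆, z.2⁆ + ⁅⁅x.1, y.2⁆ + ⁅x.2, y.1⁆, z.1⁆ : L) +
        (⁅y.1, ⁅x.1, z.2⁆ + ⁅x.2, z.1⁆⁆ + ⁅y.2, ⁅x.1, z.1⁆⁆ : L)
      simp only [lie_add, add_lie, lie_lie]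
      abel
    }

instance : LieAlgebra k (Dbl L) :=
  { (inferInstance : Module k (Dbl L)) with
    lie_smul := by
      intro t x y
      show ((⁅x.1, t • y.1⁆ : L), (⁅x.1, t • y.2⁆ + ⁅x.2, t • y.1⁆ : L)) =
        ((t • ⁅x.1, y.1⁆ : L), (t • (⁅x.1, y.2⁆ + ⁅x.2, y.1⁆) : L))
      refine congrArg₂ Prod.mk (lie_smul _ _ _) ?_
      rw [lie_smul, lie_smul, smul_add] }

variable {k L} {M : Type} [LieRing M] [LieAlgebra k M]

/-- Pairing a Lie hom `θ` with a `θ`-derivation `D` gives a Lie hom into `Dbl L`. -/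
def pairHom (θ : M →ₗ⁅k⁆ L) (D : M →ₗ[k] L)
    (hD : ∀ a b, D ⁅a, b⁆ = ⁅θ a, D b⁆ + ⁅D a, θ b⁆) : M →ₗ⁅k⁆ Dbl L where
  toFun m := ((θ m : L), (D m : L))
  map_add' a b :=
    show ((θ (a + b) : L), (D (a + b) : L)) = ((θ a + θ b : L), (D a + D b : L)) from
      congrArg₂ Prod.mk (θ.map_add a b) (D.map_add a b)
  map_smul' t a :=
    show ((θ (t • a) : L), (D (t • a) : L)) = ((t • θ a : L), (t • D a : L)) from
      congrArg₂ Prod.mk (θ.map_smul t a) (D.map_smul t a)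
  map_lie' {a b} := by
    show ((θ ⁅a, b⁆ : L), (D ⁅a, b⁆ : L)) = ((⁅θ a, θ b⁆ : L), (⁅θ a, D b⁆ + ⁅D a, θ b⁆ : L))
    exact congrArg₂ Prod.mk (θ.map_lie a b) (hD a b)

end Dbl

section Key

variable {k : Type} [Field k]

lemma key_comm
    (u : LieDerivation k (FreeLieAlgebra k (Fin 2)) (FreeLieAlgebra k (Fin 2)))
    (U : LieDerivation k (FreeLieAlgebra k (Fin 3)) (FreeLieAlgebra k (Fin 3)))
    (a₁ b₁ : FreeLieAlgebra k (Fin 2))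
    (hux : u (of k (0 : Fin 2)) = ⁅of k (0 : Fin 2), a₁⁆)
    (huy : u (of k (1 : Fin 2)) = ⁅of k (1 : Fin 2), b₁⁆)
    (hUx : U (of k (0 : Fin 3)) = ⁅of k (0 : Fin 3), theta k a₁⁆)
    (hUy : U (of k (1 : Fin 3)) = ⁅of k (1 : Fin 3), theta k a₁⁆)
    (hUz : U (of k (2 : Fin 3)) = ⁅of k (2 : Fin 3), theta k b₁⁆)
    (w : FreeLieAlgebra k (Fin 2)) :
    U (theta k w) = theta k (u w) := by
  let F : FreeLieAlgebra k (Fin 2) →ₗ⁅k⁆ Dbl (FreeLieAlgebra k (Fin 3)) :=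
    pairHom (theta k) (U.toLinearMap ∘ₗ (theta k).toLinearMap)
      (fun a b => by
        show U (theta k ⁅a, b⁆) = ⁅theta k a, U (theta k b)⁆ + ⁅U (theta k a), theta k b⁆
        rw [LieHom.map_lie, U.apply_lie_eq_add])
  let G : FreeLieAlgebra k (Fin 2) →ₗ⁅k⁆ Dbl (FreeLieAlgebra k (Fin 3)) :=
    pairHom (theta k) ((theta k).toLinearMap ∘ₗ u.toLinearMap)
      (fun a b => by
        show theta k (u ⁅a, b⁆) = ⁅theta k a, theta k (u b)⁆ + ⁅theta k (u a), theta k b⁆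
        rw [u.apply_lie_eq_add, map_add, LieHom.map_lie, LieHom.map_lie])
  have hFG : F = G := by
    apply FreeLieAlgebra.hom_ext
    intro x
    fin_cases x
    · show ((theta k (of k 0) : _), _) = ((theta k (of k 0) : _), _)
      have hθ : theta k (of k (0 : Fin 2)) = of k (0 : Fin 3) + of k (1 : Fin 3) := by
        rw [theta, lift_of_apply]; rfl
      refine Prod.ext rfl ?_
      show U (theta k (of k (0 : Fin 2))) = theta k (u (of k (0 : Fin 2)))
      rw [hθ, hux, map_add, hUx, hUy, LieHom.map_lie, hθ, add_lie]
    · have hθ : theta k (of k (1 : Fin 2)) = of k (2 : Fin 3) := by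
        rw [theta, lift_of_apply]; rfl
      refine Prod.ext rfl ?_
      show U (theta k (of k (1 : Fin 2))) = theta k (u (of k (1 : Fin 2)))
      rw [hθ, hUz, huy, LieHom.map_lie, hθ]
  have := congrArg (fun f : FreeLieAlgebra k (Fin 2) →ₗ⁅k⁆ Dbl (FreeLieAlgebra k (Fin 3)) =>
    (f w : FreeLieAlgebra k (Fin 3) × FreeLieAlgebra k (Fin 3)).2) hFG
  exact this

end Key

/-- The coproduct map on tangential derivations is a Lie algebra homomorphism:
`[u^{12,3}, v^{12,3}] = [u,v]^{12,3}`, computed on the generators `x, y, z`. -/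
theorem coproduct_is_hom (k : Type) [Field k] [CharZero k]
    (u v : LieDerivation k (FreeLieAlgebra k (Fin 2)) (FreeLieAlgebra k (Fin 2)))
    (U V : LieDerivation k (FreeLieAlgebra k (Fin 3)) (FreeLieAlgebra k (Fin 3)))
    (a₁ b₁ a₂ b₂ : FreeLieAlgebra k (Fin 2))
    (hux : u (of k (0 : Fin 2)) = ⁅of k (0 : Fin 2), a₁⁆)
    (huy : u (of k (1 : Fin 2)) = ⁅of k (1 : Fin 2), b₁⁆)
    (hvx : v (of k (0 : Fin 2)) = ⁅of k (0 : Fin 2), a₂⁆)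
    (hvy : v (of k (1 : Fin 2)) = ⁅of k (1 : Fin 2), b₂⁆)
    (hUx : U (of k (0 : Fin 3)) = ⁅of k (0 : Fin 3), theta k a₁⁆)
    (hUy : U (of k (1 : Fin 3)) = ⁅of k (1 : Fin 3), theta k a₁⁆)
    (hUz : U (of k (2 : Fin 3)) = ⁅of k (2 : Fin 3), theta k b₁⁆)
    (hVx : V (of k (0 : Fin 3)) = ⁅of k (0 : Fin 3), theta k a₂⁆)
    (hVy : V (of k (1 : Fin 3)) = ⁅of k (1 : Fin 3), theta k a₂⁆)
    (hVz : V (of k (2 : Fin 3)) = ⁅of k (2 : Fin 3), theta k b₂⁆) :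
    ⁅U, V⁆ (of k (0 : Fin 3)) = ⁅of k (0 : Fin 3), theta k (u a₂ - v a₁ + ⁅a₁, a₂⁆)⁆ ∧
    ⁅U, V⁆ (of k (1 : Fin 3)) = ⁅of k (1 : Fin 3), theta k (u a₂ - v a₁ + ⁅a₁, a₂⁆)⁆ ∧
    ⁅U, V⁆ (of k (2 : Fin 3)) = ⁅of k (2 : Fin 3), theta k (u b₂ - v b₁ + ⁅b₁, b₂⁆)⁆ := by
  have hU := key_comm u U a₁ b₁ hux huy hUx hUy hUz
  have hV := key_comm v V a₂ b₂ hvx hvy hVx hVy hVz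
  have jac : ∀ (x a b : FreeLieAlgebra k (Fin 3)),
      ⁅⁅x, a⁆, b⁆ - ⁅⁅x, b⁆, a⁆ = ⁅x, ⁅a, b⁆⁆ := by
    intro x a b
    rw [lie_lie x a b, ← lie_skew a ⁅x, b⁆]
    abel
  refine ⟨?_, ?_, ?_⟩
  · rw [LieDerivation.commutator_apply, hVx, hUx,
      LieDerivation.apply_lie_eq_add, LieDerivation.apply_lie_eq_add,
      hUx, hVx, hU, hV, map_add, map_sub, LieHom.map_lie, lie_add, lie_sub,
      ← jac (of k (0 : Fin 3)) (theta k a₁) (theta k a₂)]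
    abel
  · rw [LieDerivation.commutator_apply, hVy, hUy,
      LieDerivation.apply_lie_eq_add, LieDerivation.apply_lie_eq_add,
      hUy, hVy, hU, hV, map_add, map_sub, LieHom.map_lie, lie_add, lie_sub,
      ← jac (of k (1 : Fin 3)) (theta k a₁) (theta k a₂)]
    abel
  · rw [LieDerivation.commutator_apply, hVz, hUz,
      LieDerivation.apply_lie_eq_add, LieDerivation.apply_lie_eq_add,
      hUz, hVz, hU, hV, map_add, map_sub, LieHom.map_lie, lie_add, lie_sub,
      ← jac (of k (2 : Fin 3)) (theta k b₁) (theta k b₂)]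
    abel
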